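/- arXiv:2002.03400 — 3 statements merged into one kernel-verified Lean document; each statement's English description precedes it below -/
import Mathlib

section
/- Let D be a real m×s matrix with orthonormal columns (Dᵀ D = 1), let R be a real s×r matrix with orthonormal columns (Rᵀ R = 1), let K be a real m×n matrix, and set U = D·R. Then ‖K − U·Uᵀ·K‖_F² = ‖K − D·Dᵀ·K‖_F² + ‖Dᵀ·K − R·Rᵀ·Dᵀ·K‖_F². (This identity, used in the proof of Theorem 5.1, decomposes the approximation error of a nested column basis U = D·R into the error of the coarser basis D plus the compression error of the transfer matrix R applied to the intermediate matrix Dᵀ·K.) -/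
open Matrix

/-- Frobenius norm of a real matrix. -/
noncomputable def frobNorm {α β : Type*} [Fintype α] [Fintype β] (A : Matrix α β ℝ) : ℝ :=
  Real.sqrt (∑ i, ∑ j, A i j ^ 2)

lemma frobNorm_sq_eq_trace {α β : Type*} [Fintype α] [Fintype β] (A : Matrix α β ℝ) :
    frobNorm A ^ 2 = Matrix.trace (Aᵀ * A) := by
  have h : frobNorm A ^ 2 = ∑ i, ∑ j, A i j ^ 2 := by
    rw [frobNorm, Real.sq_sqrt]
    positivity
  rw [h, Matrix.trace, Finset.sum_comm]
  simp [Matrix.diag, Matrix.mul_apply, Matrix.transpose_apply, sq]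

theorem nested_basis_error_decomposition {m s r n : ℕ}
    (D : Matrix (Fin m) (Fin s) ℝ) (R : Matrix (Fin s) (Fin r) ℝ)
    (K : Matrix (Fin m) (Fin n) ℝ)
    (hD : Dᵀ * D = 1) (hR : Rᵀ * R = 1) :
    frobNorm (K - (D * R) * ((D * R)ᵀ * K)) ^ 2 =
      frobNorm (K - D * (Dᵀ * K)) ^ 2 +
        frobNorm (Dᵀ * K - R * (Rᵀ * (Dᵀ * K))) ^ 2 := by
  set A : Matrix (Fin m) (Fin n) ℝ := K - D * (Dᵀ * K) with hA
  set M : Matrix (Fin s) (Fin n) ℝ := Dᵀ * K - R * (Rᵀ * (Dᵀ * K)) with hM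
  have hsplit : K - (D * R) * ((D * R)ᵀ * K) = A + D * M := by
    simp only [hA, hM, Matrix.transpose_mul, Matrix.mul_sub, Matrix.mul_assoc]
    abel
  have hDA : Dᵀ * A = 0 := by
    simp only [hA, Matrix.mul_sub, ← Matrix.mul_assoc, hD, Matrix.one_mul, sub_self]
  rw [hsplit, frobNorm_sq_eq_trace, frobNorm_sq_eq_trace, frobNorm_sq_eq_trace]
  have expand : (A + D * M)ᵀ * (A + D * M)
      = Aᵀ * A + Aᵀ * (D * M) + ((D * M)ᵀ * A + Mᵀ * M) := by
    have h1 : (D * M)ᵀ * (D * M) = Mᵀ * M := by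
      rw [Matrix.transpose_mul, Matrix.mul_assoc, ← Matrix.mul_assoc Dᵀ, hD, Matrix.one_mul]
    rw [Matrix.transpose_add, Matrix.add_mul, Matrix.mul_add, Matrix.mul_add, h1]
  have hAtD : Aᵀ * (D * M) = 0 := by
    rw [← Matrix.mul_assoc]
    have : Aᵀ * D = 0 := by
      have := congrArg Matrix.transpose hDA
      simpa using this
    rw [this, Matrix.zero_mul]
  have hDMA : (D * M)ᵀ * A = 0 := by
    rw [Matrix.transpose_mul, Matrix.mul_assoc, hDA, Matrix.mul_zero]
  rw [expand, hAtD, hDMA]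
  simp [Matrix.trace_add]
end

section
/- Let K₁₁, K₁₂ be real m₁×n₁ and m₁×n₂ matrices and K₂₁, K₂₂ be real m₂×n₁ and m₂×n₂ matrices; let K denote the 2×2 block matrix with blocks K₁₁, K₁₂, K₂₁, K₂₂. Let U₁ (m₁×s₁) and U₂ (m₂×s₂) have orthonormal columns, let D = diag(U₁, U₂), let ε ≥ 0, and for b ∈ {1,2} let R_b be an (s₁+s₂)×r_b matrix with orthonormal columns satisfying ‖E_b − R_b·R_bᵀ·E_b‖_F ≤ ε·‖E_b‖_F, where E_b = [U₁ᵀ·K₁b ; U₂ᵀ·K₂b] is the vertical stack, and set U'_b = D·R_b. Then ‖[K₁₁;K₂₁] − U'₁·U'₁ᵀ·[K₁₁;K₂₁]‖_F² + ‖[K₁₂;K₂₂] − U'₂·U'₂ᵀ·[K₁₂;K₂₂]‖_F² ≤ ‖[K₁₁ K₁₂] − U₁·U₁ᵀ·[K₁₁ K₁₂]‖_F² + ‖[K₂₁ K₂₂] − U₂·U₂ᵀ·[K₂₁ K₂₂]‖_F² + ε²·‖K‖_F². (This is the assembled per-node inequality in the proof of Theorem 5.1: the squared approximation error of the two sibling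 blocks at level l is bounded by the error of the two children blocks at level l+1 plus ε²‖K‖_F².) -/
open Matrix

noncomputable def frobSq {α β : Type*} [Fintype α] [Fintype β] (A : Matrix α β ℝ) : ℝ :=
  ∑ i, ∑ j, A i j ^ 2

lemma frobSq_nonneg {α β : Type*} [Fintype α] [Fintype β] (A : Matrix α β ℝ) : 0 ≤ frobSq A :=
  Finset.sum_nonneg fun _ _ => Finset.sum_nonneg fun _ _ => sq_nonneg _

lemma frobNorm_sq {α β : Type*} [Fintype α] [Fintype β] (A : Matrix α β ℝ) :
    frobNorm A ^ 2 = frobSq A :=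
  Real.sq_sqrt (frobSq_nonneg A)

lemma frobNorm_nonneg {α β : Type*} [Fintype α] [Fintype β] (A : Matrix α β ℝ) :
    0 ≤ frobNorm A := Real.sqrt_nonneg _

lemma frobSq_eq_trace {α β : Type*} [Fintype α] [Fintype β] (A : Matrix α β ℝ) :
    frobSq A = (Aᵀ * A).trace := by
  simp only [frobSq, Matrix.trace, Matrix.diag, Matrix.mul_apply, Matrix.transpose_apply, sq]
  exact Finset.sum_comm

lemma frobSq_fromRows {α₁ α₂ β : Type*} [Fintype α₁] [Fintype α₂] [Fintype β]
    (A : Matrix α₁ β ℝ) (B : Matrix α₂ β ℝ) :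
    frobSq (Matrix.fromRows A B) = frobSq A + frobSq B := by
  simp [frobSq, Fintype.sum_sum_type]

lemma frobSq_fromColumns {α β₁ β₂ : Type*} [Fintype α] [Fintype β₁] [Fintype β₂]
    (A : Matrix α β₁ ℝ) (B : Matrix α β₂ ℝ) :
    frobSq (Matrix.fromCols A B) = frobSq A + frobSq B := by
  simp [frobSq, Fintype.sum_sum_type, Finset.sum_add_distrib]

lemma frobSq_fromBlocks {α₁ α₂ β₁ β₂ : Type*} [Fintype α₁] [Fintype α₂] [Fintype β₁] [Fintype β₂]
    (A : Matrix α₁ β₁ ℝ) (B : Matrix α₁ β₂ ℝ) (C : Matrix α₂ β₁ ℝ) (D : Matrix α₂ β₂ ℝ) :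
    frobSq (Matrix.fromBlocks A B C D) = frobSq A + frobSq B + frobSq C + frobSq D := by
  simp [frobSq, Fintype.sum_sum_type, Finset.sum_add_distrib]
  ring

lemma pythagoras {α β γ : Type*} [Fintype α] [Fintype β] [Fintype γ] [DecidableEq γ]
    (D : Matrix α γ ℝ) (hD : Dᵀ * D = 1) (A : Matrix α β ℝ) :
    frobSq (A - D * (Dᵀ * A)) = frobSq A - frobSq (Dᵀ * A) := by
  set E := Dᵀ * A with hE
  have h1 : Dᵀ * (D * E) = E := by rw [← Matrix.mul_assoc, hD, Matrix.one_mul]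
  rw [frobSq_eq_trace, frobSq_eq_trace, frobSq_eq_trace]
  have expand : (A - D * E)ᵀ * (A - D * E)
      = Aᵀ * A - Aᵀ * (D * E) - (D * E)ᵀ * A + (D * E)ᵀ * (D * E) := by
    rw [Matrix.transpose_sub, Matrix.sub_mul, Matrix.mul_sub, Matrix.mul_sub]
    abel
  rw [expand]
  have h2 : (D * E)ᵀ * (D * E) = Eᵀ * E := by
    rw [Matrix.transpose_mul, Matrix.mul_assoc, h1]
  have h3 : (D * E)ᵀ * A = Eᵀ * E := by
    rw [Matrix.transpose_mul, Matrix.mul_assoc, ← hE]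
  have h4 : (Aᵀ * (D * E)).trace = (Eᵀ * E).trace := by
    rw [← Matrix.trace_transpose (Aᵀ * (D * E)), Matrix.transpose_mul,
      Matrix.transpose_transpose, h3]
  rw [Matrix.trace_add, Matrix.trace_sub, Matrix.trace_sub, h2, h3, h4]
  ring

lemma frobSq_proj_le {α β γ : Type*} [Fintype α] [Fintype β] [Fintype γ] [DecidableEq γ]
    (D : Matrix α γ ℝ) (hD : Dᵀ * D = 1) (A : Matrix α β ℝ) :
    frobSq (Dᵀ * A) ≤ frobSq A := by
  have := pythagoras D hD A
  have h := frobSq_nonneg (A - D * (Dᵀ * A))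
  linarith

theorem per_node_inequality {m₁ m₂ s₁ s₂ n₁ n₂ r₁ r₂ : ℕ}
    (K₁₁ : Matrix (Fin m₁) (Fin n₁) ℝ) (K₁₂ : Matrix (Fin m₁) (Fin n₂) ℝ)
    (K₂₁ : Matrix (Fin m₂) (Fin n₁) ℝ) (K₂₂ : Matrix (Fin m₂) (Fin n₂) ℝ)
    (U₁ : Matrix (Fin m₁) (Fin s₁) ℝ) (U₂ : Matrix (Fin m₂) (Fin s₂) ℝ)
    (hU₁ : U₁ᵀ * U₁ = 1) (hU₂ : U₂ᵀ * U₂ = 1)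
    (ε : ℝ) (hε : 0 ≤ ε)
    (R₁ : Matrix (Fin s₁ ⊕ Fin s₂) (Fin r₁) ℝ)
    (R₂ : Matrix (Fin s₁ ⊕ Fin s₂) (Fin r₂) ℝ)
    (hR₁ : R₁ᵀ * R₁ = 1) (hR₂ : R₂ᵀ * R₂ = 1)
    (hE₁ : frobNorm (Matrix.fromRows (U₁ᵀ * K₁₁) (U₂ᵀ * K₂₁) -
        R₁ * (R₁ᵀ * Matrix.fromRows (U₁ᵀ * K₁₁) (U₂ᵀ * K₂₁))) ≤
      ε * frobNorm (Matrix.fromRows (U₁ᵀ * K₁₁) (U₂ᵀ * K₂₁)))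
    (hE₂ : frobNorm (Matrix.fromRows (U₁ᵀ * K₁₂) (U₂ᵀ * K₂₂) -
        R₂ * (R₂ᵀ * Matrix.fromRows (U₁ᵀ * K₁₂) (U₂ᵀ * K₂₂))) ≤
      ε * frobNorm (Matrix.fromRows (U₁ᵀ * K₁₂) (U₂ᵀ * K₂₂))) :
    frobNorm (Matrix.fromRows K₁₁ K₂₁ -
        (Matrix.fromBlocks U₁ 0 0 U₂ * R₁) *
          ((Matrix.fromBlocks U₁ 0 0 U₂ * R₁)ᵀ * Matrix.fromRows K₁₁ K₂₁)) ^ 2 +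
      frobNorm (Matrix.fromRows K₁₂ K₂₂ -
        (Matrix.fromBlocks U₁ 0 0 U₂ * R₂) *
          ((Matrix.fromBlocks U₁ 0 0 U₂ * R₂)ᵀ * Matrix.fromRows K₁₂ K₂₂)) ^ 2 ≤
    frobNorm (Matrix.fromCols K₁₁ K₁₂ -
        U₁ * (U₁ᵀ * Matrix.fromCols K₁₁ K₁₂)) ^ 2 +
      frobNorm (Matrix.fromCols K₂₁ K₂₂ -
        U₂ * (U₂ᵀ * Matrix.fromCols K₂₁ K₂₂)) ^ 2 +
      ε ^ 2 * frobNorm (Matrix.fromBlocks K₁₁ K₁₂ K₂₁ K₂₂) ^ 2 := by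
  set D : Matrix (Fin m₁ ⊕ Fin m₂) (Fin s₁ ⊕ Fin s₂) ℝ := Matrix.fromBlocks U₁ 0 0 U₂ with hDdef
  have hD : Dᵀ * D = 1 := by
    rw [hDdef, Matrix.fromBlocks_transpose, Matrix.fromBlocks_multiply]
    simp [hU₁, hU₂, Matrix.fromBlocks_one]
  set A₁ : Matrix (Fin m₁ ⊕ Fin m₂) (Fin n₁) ℝ := Matrix.fromRows K₁₁ K₂₁ with hA₁
  set A₂ : Matrix (Fin m₁ ⊕ Fin m₂) (Fin n₂) ℝ := Matrix.fromRows K₁₂ K₂₂ with hA₂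
  have hDA₁ : Dᵀ * A₁ = Matrix.fromRows (U₁ᵀ * K₁₁) (U₂ᵀ * K₂₁) := by
    rw [hDdef, hA₁, Matrix.fromBlocks_transpose, Matrix.fromBlocks_mul_fromRows]
    simp
  have hDA₂ : Dᵀ * A₂ = Matrix.fromRows (U₁ᵀ * K₁₂) (U₂ᵀ * K₂₂) := by
    rw [hDdef, hA₂, Matrix.fromBlocks_transpose, Matrix.fromBlocks_mul_fromRows]
    simp
  -- orthonormality of D * R_b
  have hDR₁ : (D * R₁)ᵀ * (D * R₁) = 1 := by
    rw [Matrix.transpose_mul, Matrix.mul_assoc, ← Matrix.mul_assoc Dᵀ, hD, Matrix.one_mul, hR₁]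
  have hDR₂ : (D * R₂)ᵀ * (D * R₂) = 1 := by
    rw [Matrix.transpose_mul, Matrix.mul_assoc, ← Matrix.mul_assoc Dᵀ, hD, Matrix.one_mul, hR₂]
  -- LHS via pythagoras
  have hL₁ : frobNorm (A₁ - (D * R₁) * ((D * R₁)ᵀ * A₁)) ^ 2
      = frobSq A₁ - frobSq ((D * R₁)ᵀ * A₁) := by
    rw [frobNorm_sq, pythagoras _ hDR₁]
  have hL₂ : frobNorm (A₂ - (D * R₂) * ((D * R₂)ᵀ * A₂)) ^ 2
      = frobSq A₂ - frobSq ((D * R₂)ᵀ * A₂) := by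
    rw [frobNorm_sq, pythagoras _ hDR₂]
  -- rewrite (D*R)ᵀ*A = Rᵀ*(Dᵀ*A)
  have hRE₁ : (D * R₁)ᵀ * A₁ = R₁ᵀ * (Dᵀ * A₁) := by
    rw [Matrix.transpose_mul, Matrix.mul_assoc]
  have hRE₂ : (D * R₂)ᵀ * A₂ = R₂ᵀ * (Dᵀ * A₂) := by
    rw [Matrix.transpose_mul, Matrix.mul_assoc]
  -- hypotheses squared
  have hsq₁ : frobSq (Dᵀ * A₁) - frobSq (R₁ᵀ * (Dᵀ * A₁)) ≤ ε ^ 2 * frobSq (Dᵀ * A₁) := by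
    have h := mul_self_le_mul_self (frobNorm_nonneg _) hE₁
    rw [← pow_two, ← pow_two, mul_pow, frobNorm_sq, frobNorm_sq] at h
    rw [← hDA₁] at h
    have hp := pythagoras R₁ hR₁ (Dᵀ * A₁)
    linarith
  have hsq₂ : frobSq (Dᵀ * A₂) - frobSq (R₂ᵀ * (Dᵀ * A₂)) ≤ ε ^ 2 * frobSq (Dᵀ * A₂) := by
    have h := mul_self_le_mul_self (frobNorm_nonneg _) hE₂
    rw [← pow_two, ← pow_two, mul_pow, frobNorm_sq, frobNorm_sq] at h
    rw [← hDA₂] at h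
    have hp := pythagoras R₂ hR₂ (Dᵀ * A₂)
    linarith
  -- E bounds
  have hEA₁ : frobSq (Dᵀ * A₁) ≤ frobSq A₁ := frobSq_proj_le D hD A₁
  have hEA₂ : frobSq (Dᵀ * A₂) ≤ frobSq A₂ := frobSq_proj_le D hD A₂
  -- RHS via pythagoras
  have hR1 : frobNorm (Matrix.fromCols K₁₁ K₁₂ - U₁ * (U₁ᵀ * Matrix.fromCols K₁₁ K₁₂)) ^ 2
      = frobSq (Matrix.fromCols K₁₁ K₁₂) - frobSq (U₁ᵀ * Matrix.fromCols K₁₁ K₁₂) := by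
    rw [frobNorm_sq, pythagoras _ hU₁]
  have hR2 : frobNorm (Matrix.fromCols K₂₁ K₂₂ - U₂ * (U₂ᵀ * Matrix.fromCols K₂₁ K₂₂)) ^ 2
      = frobSq (Matrix.fromCols K₂₁ K₂₂) - frobSq (U₂ᵀ * Matrix.fromCols K₂₁ K₂₂) := by
    rw [frobNorm_sq, pythagoras _ hU₂]
  -- expand block sums
  have hc1 : U₁ᵀ * Matrix.fromCols K₁₁ K₁₂ = Matrix.fromCols (U₁ᵀ * K₁₁) (U₁ᵀ * K₁₂) :=
    Matrix.mul_fromCols _ _ _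
  have hc2 : U₂ᵀ * Matrix.fromCols K₂₁ K₂₂ = Matrix.fromCols (U₂ᵀ * K₂₁) (U₂ᵀ * K₂₂) :=
    Matrix.mul_fromCols _ _ _
  have key : frobSq A₁ - frobSq (Dᵀ * A₁) + (frobSq A₂ - frobSq (Dᵀ * A₂))
      = (frobSq (Matrix.fromCols K₁₁ K₁₂) - frobSq (U₁ᵀ * Matrix.fromCols K₁₁ K₁₂))
        + (frobSq (Matrix.fromCols K₂₁ K₂₂) - frobSq (U₂ᵀ * Matrix.fromCols K₂₁ K₂₂)) := by
    rw [hc1, hc2, hDA₁, hDA₂, hA₁, hA₂, frobSq_fromRows, frobSq_fromRows, frobSq_fromRows,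
      frobSq_fromRows, frobSq_fromColumns, frobSq_fromColumns, frobSq_fromColumns,
      frobSq_fromColumns]
    ring
  have hK : frobNorm (Matrix.fromBlocks K₁₁ K₁₂ K₂₁ K₂₂) ^ 2 = frobSq A₁ + frobSq A₂ := by
    rw [frobNorm_sq, frobSq_fromBlocks, hA₁, hA₂, frobSq_fromRows, frobSq_fromRows]
    ring
  rw [hL₁, hL₂, hR1, hR2, hK, hRE₁, hRE₂]
  have hε₁ : ε ^ 2 * frobSq (Dᵀ * A₁) ≤ ε ^ 2 * frobSq A₁ :=
    mul_le_mul_of_nonneg_left hEA₁ (sq_nonneg ε)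
  have hε₂ : ε ^ 2 * frobSq (Dᵀ * A₂) ≤ ε ^ 2 * frobSq A₂ :=
    mul_le_mul_of_nonneg_left hEA₂ (sq_nonneg ε)
  linarith
end

section
/- (Theorem 5.3, hybrid butterfly error bound, stated over an arbitrary family of blocks.) Let ι be a finite index set, and for each b ∈ ι let K_b be a real m_b × n_b matrix, U_b a real m_b × r_b matrix with orthonormal columns, and V_b a real n_b × s_b matrix with orthonormal columns. Let L, lm be natural numbers with lm ≤ L, let ε ≥ 0 and c ≥ 0 (here c = ‖K(T,S)‖_F² in the paper). If Σ_{b∈ι} ‖K_b − U_b·U_bᵀ·K_b‖_F² ≤ (L − lm + 1)·ε²·c and Σ_{b∈ι} ‖K_b − K_b·V_b·V_bᵀ‖_F² ≤ (lm + 1)·ε²·c, then Σ_{b∈ι} ‖K_b − U_b·U_bᵀ·K_b·V_b·V_bᵀ‖_F² ≤ (L + 2)·ε²·c. -/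
open Matrix

lemma frobSq_trace {α β : Type*} [Fintype α] [Fintype β] (A : Matrix α β ℝ) :
    frobSq A = Matrix.trace (Aᵀ * A) := by
  simp only [frobSq, Matrix.trace, Matrix.diag, Matrix.mul_apply, Matrix.transpose_apply, sq]
  exact Finset.sum_comm

lemma pyth {α β : Type*} [Fintype α] [Fintype β] (A B : Matrix α β ℝ)
    (h : Aᵀ * B = 0) : frobSq (A + B) = frobSq A + frobSq B := by
  have h2 : Bᵀ * A = 0 := by
    have := congrArg Matrix.transpose h
    simpa [Matrix.transpose_mul] using this
  rw [frobSq_trace, frobSq_trace, frobSq_trace, Matrix.transpose_add, Matrix.add_mul,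
    Matrix.mul_add, Matrix.mul_add, h, h2]
  simp

lemma block_ineq {m n r : ℕ} (K : Matrix (Fin m) (Fin n) ℝ)
    (U : Matrix (Fin m) (Fin r) ℝ) (hU : Uᵀ * U = 1)
    (W : Matrix (Fin n) (Fin n) ℝ) :
    frobSq (K - U * Uᵀ * (K * W)) ≤ frobSq (K - U * Uᵀ * K) + frobSq (K - K * W) := by
  set P : Matrix (Fin m) (Fin m) ℝ := U * Uᵀ with hP
  have hPT : Pᵀ = P := by simp [hP, Matrix.transpose_mul]
  have hPP : P * P = P := by
    rw [hP, Matrix.mul_assoc, ← Matrix.mul_assoc Uᵀ U Uᵀ, hU, Matrix.one_mul]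
  have h0 : ∀ {k : ℕ} (X Y : Matrix (Fin m) (Fin k) ℝ), (X - P * X)ᵀ * (P * Y) = 0 := by
    intro k X Y
    rw [Matrix.transpose_sub, Matrix.sub_mul, Matrix.transpose_mul, hPT,
      Matrix.mul_assoc Xᵀ P (P * Y), ← Matrix.mul_assoc P P Y, hPP, sub_self]
  set N : Matrix (Fin m) (Fin n) ℝ := K - K * W with hN
  have hdecomp : K - P * (K * W) = (K - P * K) + P * N := by
    rw [hN, Matrix.mul_sub]; abel
  have h1 : frobSq (K - P * (K * W)) = frobSq (K - P * K) + frobSq (P * N) := by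
    rw [hdecomp]; exact pyth _ _ (h0 K N)
  have h2 : frobSq N = frobSq (N - P * N) + frobSq (P * N) := by
    have := pyth (N - P * N) (P * N) (h0 N N)
    simpa using this
  have h3 : frobSq (P * N) ≤ frobSq N := by
    rw [h2]; nlinarith [frobSq_nonneg (N - P * N)]
  linarith [h1, h3]

theorem hybrid_butterfly_error_bound {ι : Type*} [Fintype ι]
    (m n r s : ι → ℕ)
    (K : ∀ b, Matrix (Fin (m b)) (Fin (n b)) ℝ)
    (U : ∀ b, Matrix (Fin (m b)) (Fin (r b)) ℝ)
    (V : ∀ b, Matrix (Fin (n b)) (Fin (s b)) ℝ)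
    (hU : ∀ b, (U b)ᵀ * U b = 1) (hV : ∀ b, (V b)ᵀ * V b = 1)
    (L lm : ℕ) (hlm : lm ≤ L) (ε c : ℝ) (hε : 0 ≤ ε) (hc : 0 ≤ c)
    (hcol : ∑ b, frobNorm (K b - U b * (U b)ᵀ * K b) ^ 2 ≤
      ((L - lm + 1 : ℕ) : ℝ) * ε ^ 2 * c)
    (hrow : ∑ b, frobNorm (K b - K b * V b * (V b)ᵀ) ^ 2 ≤
      ((lm + 1 : ℕ) : ℝ) * ε ^ 2 * c) :
    ∑ b, frobNorm (K b - U b * (U b)ᵀ * K b * V b * (V b)ᵀ) ^ 2 ≤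
      ((L + 2 : ℕ) : ℝ) * ε ^ 2 * c := by
  have key : ∀ b, frobNorm (K b - U b * (U b)ᵀ * K b * V b * (V b)ᵀ) ^ 2 ≤
      frobNorm (K b - U b * (U b)ᵀ * K b) ^ 2 + frobNorm (K b - K b * V b * (V b)ᵀ) ^ 2 := by
    intro b
    rw [frobNorm_sq, frobNorm_sq, frobNorm_sq]
    have := block_ineq (K b) (U b) (hU b) (V b * (V b)ᵀ)
    have hassoc : U b * (U b)ᵀ * K b * V b * (V b)ᵀ = U b * (U b)ᵀ * (K b * (V b * (V b)ᵀ)) := by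
      simp [Matrix.mul_assoc]
    have hassoc2 : K b * V b * (V b)ᵀ = K b * (V b * (V b)ᵀ) := by
      simp [Matrix.mul_assoc]
    rw [hassoc, hassoc2]
    simpa [Matrix.mul_assoc] using this
  have hsum : ∑ b, frobNorm (K b - U b * (U b)ᵀ * K b * V b * (V b)ᵀ) ^ 2 ≤
      (∑ b, frobNorm (K b - U b * (U b)ᵀ * K b) ^ 2) +
      ∑ b, frobNorm (K b - K b * V b * (V b)ᵀ) ^ 2 := by
    rw [← Finset.sum_add_distrib]
    exact Finset.sum_le_sum fun b _ => key b
  have hcast : ((L - lm + 1 : ℕ) : ℝ) + ((lm + 1 : ℕ) : ℝ) = ((L + 2 : ℕ) : ℝ) := by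
    rw [← Nat.cast_add]; congr 1; omega
  calc ∑ b, frobNorm (K b - U b * (U b)ᵀ * K b * V b * (V b)ᵀ) ^ 2
      ≤ _ + _ := hsum
    _ ≤ ((L - lm + 1 : ℕ) : ℝ) * ε ^ 2 * c + ((lm + 1 : ℕ) : ℝ) * ε ^ 2 * c :=
        add_le_add hcol hrow
    _ = ((L + 2 : ℕ) : ℝ) * ε ^ 2 * c := by rw [← hcast]; ring
end
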